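/- Let x be a clustered graph signal of the form x[i] = Σ_l a_l·1_{C_l}[i] for the partition F, with noisy samples y[i] = x[i] + e[i] on a sampling set M ⊆ V, and let x̂ be any minimizer of the network Lasso objective Σ_{i∈M} |x̃[i] − y[i]| + λ·‖x̃‖_TV with λ > 0. Then, writing x̃ := x̂ − x, the inequality Σ_{i∈M} |x̂[i] − y[i]| + λ·‖x̃‖_{E∖∂F} ≤ λ·‖x̃‖_{∂F} + Σ_{i∈M} |e[i]| holds. -/

import Mathlib

open Finset

variable {V ι : Type*}

/-- Sum of `W i j * |x i − x j|` over a symmetric set `S` of directed edges,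
counting each undirected edge `{i,j}` exactly once (hence the division by 2). -/
noncomputable def edgeNorm (W : V → V → ℝ) (S : Finset (V × V)) (x : V → ℝ) : ℝ :=
  (∑ p ∈ S, W p.1 p.2 * |x p.1 - x p.2|) / 2

/-- The neighbourhood `N(i)` of a node `i`. -/
def nbhd [Fintype V] [DecidableEq V] (E : Finset (V × V)) (i : V) : Finset V :=
  Finset.univ.filter fun j => (i, j) ∈ E

/-- The demand induced by the flow `h` at node `i`:
`d[i] = Σ_{j ∈ N(i)} (h(j,i) − h(i,j))`. -/
noncomputable def demand [Fintype V] [DecidableEq V] (E : Finset (V × V))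
    (h : V → V → ℝ) (i : V) : ℝ :=
  ∑ j ∈ nbhd E i, (h j i - h i j)

/-- The boundary `∂F` of the partition with cluster assignment `cl`:
edges whose endpoints lie in different clusters. -/
def bdry [DecidableEq V] [DecidableEq ι] (E : Finset (V × V)) (cl : V → ι) :
    Finset (V × V) :=
  E.filter fun p => cl p.1 ≠ cl p.2

/-- The nodes `B(F)` incident to at least one boundary edge. -/
def bdryNodes [Fintype V] [DecidableEq V] [DecidableEq ι] (E : Finset (V × V))
    (cl : V → ι) : Finset V :=
  Finset.univ.filter fun i => ∃ j, (i, j) ∈ bdry E cl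

/-- The sampling set `M` resolves the partition `cl` with constants `K, L`:
for every choice of bits `b` on the boundary edges (one bit per undirected
boundary edge, encoded by `b (j,i) = !b (i,j)`), there is a flow `h` obeying
the capacity constraints on intra-cluster edges, carrying flow `L·W[i,j]` in
the direction selected by the bit on every boundary edge, and whose demands
satisfy `|d[i]| ≤ K` on `M` and `d[i] = 0` off `M`. -/
def Resolves [Fintype V] [DecidableEq V] [DecidableEq ι] (E : Finset (V × V))
    (W : V → V → ℝ) (cl : V → ι) (M : Finset V) (K L : ℝ) : Prop :=
  ∀ b : V × V → Bool, (∀ p ∈ bdry E cl, b (p.2, p.1) = !b p) →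
    ∃ h : V → V → ℝ,
      (∀ p ∈ E \ bdry E cl, |h p.1 p.2| ≤ W p.1 p.2) ∧
      (∀ p ∈ bdry E cl, h p.1 p.2 = (if b p then (1 : ℝ) else 0) * (L * W p.1 p.2)) ∧
      (∀ i ∈ M, |demand E h i| ≤ K) ∧
      (∀ i, i ∉ M → demand E h i = 0)

/-- For a clustered signal `x` and any nLasso minimizer `x̂`,
writing `x̃ = x̂ − x`, one has
`Σ_{i∈M}|x̂[i]−y[i]| + λ‖x̃‖_{E∖∂F} ≤ λ‖x̃‖_{∂F} + Σ_{i∈M}|e[i]|`. -/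
theorem minimizer_boundary_inequality
    [Fintype V] [DecidableEq V] [DecidableEq ι]
    (E : Finset (V × V)) (W : V → V → ℝ)
    (hEsymm : ∀ i j : V, (i, j) ∈ E → (j, i) ∈ E)
    (hEirr : ∀ i : V, (i, i) ∉ E)
    (hWsymm : ∀ i j : V, W i j = W j i)
    (hWpos : ∀ p ∈ E, 0 < W p.1 p.2)
    (hWzero : ∀ i j : V, (i, j) ∉ E → W i j = 0)
    (cl : V → ι) (a : ι → ℝ) (x : V → ℝ) (hx : ∀ i, x i = a (cl i))
    (M : Finset V) (e y : V → ℝ) (hy : ∀ i ∈ M, y i = x i + e i)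
    (lam : ℝ) (hlam : 0 < lam)
    (xhat : V → ℝ)
    (hmin : ∀ z : V → ℝ,
      (∑ i ∈ M, |xhat i - y i|) + lam * edgeNorm W E xhat ≤
        (∑ i ∈ M, |z i - y i|) + lam * edgeNorm W E z) :
    (∑ i ∈ M, |xhat i - y i|) +
        lam * edgeNorm W (E \ bdry E cl) (fun i => xhat i - x i) ≤
      lam * edgeNorm W (bdry E cl) (fun i => xhat i - x i) +
        ∑ i ∈ M, |e i| := by
  have hsub : bdry E cl ⊆ E := Finset.filter_subset _ _
  have hsplit : ∀ z : V → ℝ,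
      edgeNorm W E z = edgeNorm W (E \ bdry E cl) z + edgeNorm W (bdry E cl) z := by
    intro z
    unfold edgeNorm
    rw [← Finset.sum_sdiff hsub]
    ring
  have heq : ∀ p ∈ E \ bdry E cl, x p.1 = x p.2 := by
    intro p hp
    rw [Finset.mem_sdiff, bdry, Finset.mem_filter] at hp
    rw [hx, hx]
    have : cl p.1 = cl p.2 := by
      by_contra h
      exact hp.2 ⟨hp.1, h⟩
    rw [this]
  have hxt : edgeNorm W (E \ bdry E cl) (fun i => xhat i - x i)
      = edgeNorm W (E \ bdry E cl) xhat := by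
    unfold edgeNorm
    congr 1
    apply Finset.sum_congr rfl
    intro p hp
    simp only []
    rw [show xhat p.1 - x p.1 - (xhat p.2 - x p.2) = (xhat p.1 - xhat p.2) - (x p.1 - x p.2) by ring,
      heq p hp, sub_self, sub_zero]
  have hx0 : edgeNorm W (E \ bdry E cl) x = 0 := by
    unfold edgeNorm
    rw [Finset.sum_eq_zero, zero_div]
    intro p hp
    rw [heq p hp, sub_self, abs_zero, mul_zero]
  have htri : edgeNorm W (bdry E cl) x ≤
      edgeNorm W (bdry E cl) (fun i => xhat i - x i) + edgeNorm W (bdry E cl) xhat := by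
    unfold edgeNorm
    rw [← add_div]
    apply div_le_div_of_nonneg_right ?_ (by norm_num)
    rw [← Finset.sum_add_distrib]
    apply Finset.sum_le_sum
    intro p hp
    have hW : 0 ≤ W p.1 p.2 := (hWpos p (hsub hp)).le
    have : |x p.1 - x p.2| ≤ |(xhat p.1 - x p.1) - (xhat p.2 - x p.2)| + |xhat p.1 - xhat p.2| := by
      have := abs_sub (xhat p.1 - xhat p.2) ((xhat p.1 - x p.1) - (xhat p.2 - x p.2))
      calc |x p.1 - x p.2| = |(xhat p.1 - xhat p.2) - ((xhat p.1 - x p.1) - (xhat p.2 - x p.2))| := by ring_nf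
        _ ≤ |xhat p.1 - xhat p.2| + |(xhat p.1 - x p.1) - (xhat p.2 - x p.2)| := abs_sub _ _
        _ = _ := by ring
    nlinarith [abs_nonneg ((xhat p.1 - x p.1) - (xhat p.2 - x p.2)), abs_nonneg (xhat p.1 - xhat p.2)]
  have hye : ∑ i ∈ M, |x i - y i| = ∑ i ∈ M, |e i| := by
    apply Finset.sum_congr rfl
    intro i hi
    rw [hy i hi]
    rw [show x i - (x i + e i) = -e i by ring, abs_neg]
  have key := hmin x
  rw [hye, hsplit x, hsplit xhat, hx0] at key
  nlinarith [htri, hlam]
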